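/- arXiv:2309.04796 — 2 statements merged into one kernel-verified Lean document; each statement's English description precedes it below -/
import Mathlib

section
/- For n = 2 points z1 ≠ z2 in a Carathéodory hyperbolic domain Ω and α = (α1, α2) with α1 ≠ α2, one has d_α(z1, z2) = c*_Ω(z1, z2). -/
open Complex Metric Set

noncomputable def pdist (a b : ℂ) : ℝ := ‖(a - b) / (1 - (starRingEnd ℂ) a * b)‖

noncomputable def dInv (m n : ℕ) (Ω : Set (Fin m → ℂ)) (z : Fin n → (Fin m → ℂ))
    (α : Fin n → ℂ) (i j : Fin n) : ℝ :=
  sSup {r : ℝ | ∃ f : (Fin m → ℂ) → ℂ, DifferentiableOn ℂ f Ω ∧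
    MapsTo f Ω (ball (0:ℂ) 1) ∧ (∃ c : ℂ, ∀ k, f (z k) = c * α k) ∧
    r = pdist (f (z i)) (f (z j))}

noncomputable def cStar (m : ℕ) (Ω : Set (Fin m → ℂ)) (x y : Fin m → ℂ) : ℝ :=
  sSup {r : ℝ | ∃ g : (Fin m → ℂ) → ℂ, DifferentiableOn ℂ g Ω ∧
    MapsTo g Ω (ball (0:ℂ) 1) ∧ r = pdist (g x) (g y)}

/-! ### Auxiliary results on Blaschke factors -/

/-- The Blaschke factor `z ↦ (z - a) / (1 - ā z)`. -/
noncomputable def Blas (a z : ℂ) : ℂ := (z - a) / (1 - (starRingEnd ℂ) a * z)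

lemma den_ne (a z : ℂ) (ha : ‖a‖ < 1) (hz : ‖z‖ ≤ 1) :
    (1 : ℂ) - (starRingEnd ℂ) a * z ≠ 0 := by
  intro h
  have h1 : (starRingEnd ℂ) a * z = 1 := by linear_combination -h
  have := congrArg norm h1
  rw [norm_mul, Complex.norm_conj, norm_one] at this
  nlinarith [norm_nonneg a, norm_nonneg z]

lemma normSq_key (a z : ℂ) : normSq (1 - (starRingEnd ℂ) a * z) - normSq (z - a)
    = (1 - normSq a) * (1 - normSq z) := by
  simp [Complex.normSq_apply, Complex.mul_re, Complex.mul_im, Complex.sub_re, Complex.sub_im]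
  ring

lemma abs_num_lt (a z : ℂ) (ha : ‖a‖ < 1) (hz : ‖z‖ < 1) :
    ‖z - a‖ < ‖1 - (starRingEnd ℂ) a * z‖ := by
  have hkey := normSq_key a z
  have h1 : normSq a < 1 := by rw [← Complex.sq_norm]; nlinarith [norm_nonneg a]
  have h2 : normSq z < 1 := by rw [← Complex.sq_norm]; nlinarith [norm_nonneg z]
  have hlt : normSq (z - a) < normSq (1 - (starRingEnd ℂ) a * z) := by nlinarith
  refine lt_of_pow_lt_pow_left₀ 2 (norm_nonneg _) ?_
  rw [Complex.sq_norm, Complex.sq_norm]; exact hlt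

lemma Blas_lt_one (a z : ℂ) (ha : ‖a‖ < 1) (hz : ‖z‖ < 1) :
    ‖Blas a z‖ < 1 := by
  have hd := den_ne a z ha hz.le
  have h0 : 0 < ‖1 - (starRingEnd ℂ) a * z‖ := by
    simpa [norm_pos_iff] using hd
  rw [Blas, norm_div, div_lt_one h0]
  exact abs_num_lt a z ha hz

lemma Blas_diff (a : ℂ) (ha : ‖a‖ < 1) :
    DifferentiableOn ℂ (Blas a) (ball (0:ℂ) 1) := by
  apply DifferentiableOn.div
  · exact (differentiable_id.sub_const a).differentiableOn
  · exact ((differentiable_const _).sub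
      ((differentiable_const _).mul differentiable_id)).differentiableOn
  · intro z hz
    rw [mem_ball_zero_iff] at hz
    exact den_ne a z ha (le_of_lt (by simpa using hz))

lemma Blas_maps (a : ℂ) (ha : ‖a‖ < 1) :
    MapsTo (Blas a) (ball (0:ℂ) 1) (ball (0:ℂ) 1) := by
  intro z hz
  rw [mem_ball_zero_iff] at hz ⊢
  simpa using Blas_lt_one a z ha (by simpa using hz)

lemma Blas_left_inv (a b : ℂ) (ha : ‖a‖ < 1) (hb : ‖b‖ < 1) :
    Blas (-a) (Blas a b) = b := by
  have h1 : (1:ℂ) - (starRingEnd ℂ) a * b ≠ 0 := den_ne a b ha hb.le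
  have h2 : (1:ℂ) - (starRingEnd ℂ) a * a ≠ 0 := den_ne a a ha ha.le
  simp only [Blas, map_neg, neg_mul, sub_neg_eq_add]
  have hd : (1:ℂ) + (starRingEnd ℂ) a * ((b - a) / (1 - (starRingEnd ℂ) a * b))
      = (1 - (starRingEnd ℂ) a * a) / (1 - (starRingEnd ℂ) a * b) := by
    field_simp
    ring
  rw [div_add' _ _ _ h1, hd, div_div_div_cancel_right₀ h1, div_eq_iff h2]
  ring

lemma abs_Blas (a b : ℂ) : ‖Blas a b‖ = pdist a b := by
  rw [Blas, pdist, norm_div, norm_div, norm_sub_rev]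

/-! ### Identities for points on the unit circle -/

lemma circ (a b : ℂ) (hb : ‖b‖ = 1) :
    ‖1 - (starRingEnd ℂ) a * b‖ = ‖a - b‖ := by
  have h : 1 - (starRingEnd ℂ) a * b = b * (starRingEnd ℂ) (b - a) := by
    rw [map_sub, mul_sub, Complex.mul_conj]
    rw [← Complex.sq_norm, hb]
    push_cast
    ring
  rw [h, norm_mul, hb, one_mul, Complex.norm_conj, norm_sub_rev]

lemma circ2 (a b : ℂ) (hab : ‖a‖ = 1 ∨ ‖b‖ = 1) :
    ‖1 - (starRingEnd ℂ) a * b‖ = ‖a - b‖ := by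
  rcases hab with ha | hb
  · rw [← Complex.norm_conj]
    have h : (starRingEnd ℂ) (1 - (starRingEnd ℂ) a * b) = 1 - (starRingEnd ℂ) b * a := by
      simp [map_sub, map_mul, mul_comm]
    rw [h, circ b a ha, norm_sub_rev]
  · exact circ a b hb

/-! ### Finding the right scaling via the intermediate value theorem -/

lemma exists_scale (α0 α1 : ℂ) (hα : α0 ≠ α1) (r : ℝ) (hr0 : 0 ≤ r) (hr1 : r < 1) :
    ∃ t : ℝ, 0 ≤ t ∧ ‖(t:ℂ) * α0‖ < 1 ∧ ‖(t:ℂ) * α1‖ < 1 ∧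
      pdist ((t:ℂ) * α0) ((t:ℂ) * α1) = r := by
  set M : ℝ := max (‖α0‖) (‖α1‖) with hMdef
  have hM : 0 < M := by
    by_contra h
    push_neg at h
    have h0 : ‖α0‖ ≤ 0 := le_trans (le_max_left _ _) h
    have h1 : ‖α1‖ ≤ 0 := le_trans (le_max_right _ _) h
    exact hα (by
      rw [norm_eq_zero.mp (le_antisymm h0 (norm_nonneg _)),
        norm_eq_zero.mp (le_antisymm h1 (norm_nonneg _))])
  set T : ℝ := M⁻¹ with hTdef
  have hT0 : 0 < T := inv_pos.mpr hM
  have hTM : T * M = 1 := inv_mul_cancel₀ hM.ne'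
  have hden : ∀ t ∈ Icc (0:ℝ) T,
      (1:ℂ) - (starRingEnd ℂ) ((t:ℂ) * α0) * ((t:ℂ) * α1) ≠ 0 := by
    rintro t ⟨ht0, htT⟩ h
    have h1 : (starRingEnd ℂ) ((t:ℂ) * α0) * ((t:ℂ) * α1) = 1 := by linear_combination -h
    have habs : ‖(t:ℂ) * α0‖ * ‖(t:ℂ) * α1‖ = 1 := by
      have := congrArg norm h1
      rwa [norm_mul, Complex.norm_conj, norm_one] at this
    have hx : ‖(t:ℂ) * α0‖ ≤ 1 := by
      rw [norm_mul, Complex.norm_real, Real.norm_eq_abs, _root_.abs_of_nonneg ht0]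
      calc t * ‖α0‖ ≤ T * M := by
            apply mul_le_mul htT (le_max_left _ _) (norm_nonneg _) hT0.le
        _ = 1 := hTM
    have hy : ‖(t:ℂ) * α1‖ ≤ 1 := by
      rw [norm_mul, Complex.norm_real, Real.norm_eq_abs, _root_.abs_of_nonneg ht0]
      calc t * ‖α1‖ ≤ T * M := by
            apply mul_le_mul htT (le_max_right _ _) (norm_nonneg _) hT0.le
        _ = 1 := hTM
    have hx1 : ‖(t:ℂ) * α0‖ = 1 := by nlinarith [norm_nonneg ((t:ℂ) * α0)]
    have heq : (t:ℂ) * α0 = (t:ℂ) * α1 := by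
      have hns : ((t:ℂ) * α0) * (starRingEnd ℂ) ((t:ℂ) * α0) = 1 := by
        rw [Complex.mul_conj, ← Complex.sq_norm, hx1]
        norm_num
      calc (t:ℂ) * α0 = ((t:ℂ) * α0) * ((starRingEnd ℂ) ((t:ℂ) * α0) * ((t:ℂ) * α1)) := by
            rw [h1, mul_one]
        _ = (((t:ℂ) * α0) * (starRingEnd ℂ) ((t:ℂ) * α0)) * ((t:ℂ) * α1) := by ring
        _ = (t:ℂ) * α1 := by rw [hns, one_mul]
    have ht : (t:ℂ) ≠ 0 := by
      intro h0
      rw [h0, zero_mul, norm_zero] at hx1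
      norm_num at hx1
    exact hα (mul_left_cancel₀ ht heq)
  have hcont : ContinuousOn (fun t : ℝ => pdist ((t:ℂ) * α0) ((t:ℂ) * α1)) (Icc 0 T) := by
    unfold pdist
    apply continuous_norm.comp_continuousOn
    apply ContinuousOn.div
    · fun_prop
    · exact Continuous.continuousOn (continuous_const.sub
        ((Complex.continuous_conj.comp (Complex.continuous_ofReal.mul continuous_const)).mul
          (Complex.continuous_ofReal.mul continuous_const)))
    · exact hden
  have h0val : pdist ((0:ℝ) * α0 : ℂ) ((0:ℝ) * α1 : ℂ) = 0 := by
    simp [pdist]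
  have hTne : (T:ℂ) * α0 ≠ (T:ℂ) * α1 := by
    intro h
    exact hα (mul_left_cancel₀ (by exact_mod_cast hT0.ne') h)
  have hTval : pdist ((T:ℝ) * α0 : ℂ) ((T:ℝ) * α1 : ℂ) = 1 := by
    unfold pdist
    rw [norm_div]
    rw [circ2 ((T:ℂ) * α0) ((T:ℂ) * α1) ?_]
    · exact div_self (by simpa [sub_ne_zero] using hTne)
    · rcases max_choice (‖α0‖) (‖α1‖) with hmax | hmax
      · left
        rw [norm_mul, Complex.norm_real, Real.norm_eq_abs, _root_.abs_of_nonneg hT0.le, ← hmax, hTM]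
      · right
        rw [norm_mul, Complex.norm_real, Real.norm_eq_abs, _root_.abs_of_nonneg hT0.le, ← hmax, hTM]
  have hsub := intermediate_value_Icc hT0.le hcont
  have hrmem : r ∈ Icc (pdist ((0:ℝ) * α0 : ℂ) ((0:ℝ) * α1 : ℂ))
      (pdist ((T:ℝ) * α0 : ℂ) ((T:ℝ) * α1 : ℂ)) := by
    rw [h0val, hTval]; exact ⟨hr0, hr1.le⟩
  obtain ⟨t, ⟨ht0, htT⟩, hteq⟩ := hsub hrmem
  have htlt : t < T := by
    rcases lt_or_eq_of_le htT with h | h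
    · exact h
    · exfalso
      rw [h] at hteq
      have h2 : pdist ((T:ℂ) * α0) ((T:ℂ) * α1) = r := hteq
      rw [hTval] at h2; linarith
  refine ⟨t, ht0, ?_, ?_, hteq⟩
  · rw [norm_mul, Complex.norm_real, Real.norm_eq_abs, _root_.abs_of_nonneg ht0]
    calc t * ‖α0‖ ≤ t * M := mul_le_mul_of_nonneg_left (le_max_left _ _) ht0
      _ < T * M := by exact mul_lt_mul_of_pos_right htlt hM
      _ = 1 := hTM
  · rw [norm_mul, Complex.norm_real, Real.norm_eq_abs, _root_.abs_of_nonneg ht0]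
    calc t * ‖α1‖ ≤ t * M := mul_le_mul_of_nonneg_left (le_max_right _ _) ht0
      _ < T * M := by exact mul_lt_mul_of_pos_right htlt hM
      _ = 1 := hTM

/-! ### The key normalization lemma -/

lemma exists_phi (α0 α1 : ℂ) (hα : α0 ≠ α1) (w0 w1 : ℂ)
    (h0 : ‖w0‖ < 1) (h1 : ‖w1‖ < 1) :
    ∃ φ : ℂ → ℂ, DifferentiableOn ℂ φ (ball (0:ℂ) 1) ∧
      MapsTo φ (ball (0:ℂ) 1) (ball (0:ℂ) 1) ∧
      ∃ c : ℂ, φ w0 = c * α0 ∧ φ w1 = c * α1 ∧ pdist (φ w0) (φ w1) = pdist w0 w1 := by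
  have hr0 : 0 ≤ pdist w0 w1 := norm_nonneg _
  have hr1 : pdist w0 w1 < 1 := by
    rw [← abs_Blas w0 w1]
    exact Blas_lt_one w0 w1 h0 h1
  rcases eq_or_lt_of_le hr0 with hr | hr
  · refine ⟨fun _ => 0, differentiableOn_const 0, ?_, 0, by simp, by simp, ?_⟩
    · intro x _
      simp [mem_ball_zero_iff]
    · show pdist (0:ℂ) 0 = pdist w0 w1
      rw [← hr]
      simp [pdist]
  · obtain ⟨t, ht0, ha0, ha1, hpt⟩ := exists_scale α0 α1 hα (pdist w0 w1) hr0 hr1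
    set a0 : ℂ := (t:ℂ) * α0 with ha0def
    set a1 : ℂ := (t:ℂ) * α1 with ha1def
    set u : ℂ := Blas a0 a1 with hu
    set v : ℂ := Blas w0 w1 with hv
    have huabs : ‖u‖ = pdist w0 w1 := by rw [hu, abs_Blas]; exact hpt
    have hvabs : ‖v‖ = pdist w0 w1 := abs_Blas w0 w1
    have hvne : v ≠ 0 := by
      intro h
      rw [h, norm_zero] at hvabs
      exact hr.ne hvabs
    set lam : ℂ := u / v with hlam
    have hlam1 : ‖lam‖ = 1 := by
      rw [hlam, norm_div, huabs, hvabs, div_self hr.ne']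
    have hna0 : ‖-a0‖ < 1 := by rwa [norm_neg]
    have hinner_diff : DifferentiableOn ℂ (fun z => lam * Blas w0 z) (ball (0:ℂ) 1) :=
      (differentiableOn_const lam).mul (Blas_diff w0 h0)
    have hinner_maps : MapsTo (fun z => lam * Blas w0 z) (ball (0:ℂ) 1) (ball (0:ℂ) 1) := by
      intro z hz
      rw [mem_ball_zero_iff] at hz ⊢
      rw [norm_mul, hlam1, one_mul]
      exact mem_ball_zero_iff.mp (Blas_maps w0 h0 (mem_ball_zero_iff.mpr hz))
    have hB0 : Blas w0 w0 = 0 := by simp [Blas]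
    have hφw0 : Blas (-a0) (lam * Blas w0 w0) = a0 := by
      rw [hB0, mul_zero]
      simp [Blas]
    have hφw1 : Blas (-a0) (lam * Blas w0 w1) = a1 := by
      rw [← hv, hlam, div_mul_cancel₀ u hvne, hu]
      exact Blas_left_inv a0 a1 ha0 ha1
    refine ⟨fun z => Blas (-a0) (lam * Blas w0 z),
      (Blas_diff (-a0) hna0).comp hinner_diff hinner_maps,
      (Blas_maps (-a0) hna0).comp hinner_maps, (t:ℂ), hφw0, hφw1, ?_⟩
    show pdist (Blas (-a0) (lam * Blas w0 w0)) (Blas (-a0) (lam * Blas w0 w1)) = pdist w0 w1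
    rw [hφw0, hφw1]
    exact hpt

theorem stmt9 (m : ℕ) (Ω : Set (Fin m → ℂ)) (hopen : IsOpen Ω) (hconn : IsConnected Ω)
    (hCara : ∀ x ∈ Ω, ∀ y ∈ Ω, x ≠ y → ∃ f : (Fin m → ℂ) → ℂ,
      DifferentiableOn ℂ f Ω ∧ (∃ c : ℝ, ∀ x' ∈ Ω, ‖f x'‖ ≤ c) ∧ f x ≠ f y)
    (z : Fin 2 → (Fin m → ℂ)) (hz : ∀ j, z j ∈ Ω) (hne : z 0 ≠ z 1)
    (α : Fin 2 → ℂ) (hα : α 0 ≠ α 1) :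
    dInv m 2 Ω z α 0 1 = cStar m Ω (z 0) (z 1) := by
  unfold dInv cStar
  congr 1
  ext r
  simp only [Set.mem_setOf_eq]
  constructor
  · rintro ⟨f, hfd, hfm, -, hr⟩
    exact ⟨f, hfd, hfm, hr⟩
  · rintro ⟨g, hgd, hgm, hr⟩
    have hw0 : ‖g (z 0)‖ < 1 := by
      have := hgm (hz 0)
      rwa [mem_ball_zero_iff] at this
    have hw1 : ‖g (z 1)‖ < 1 := by
      have := hgm (hz 1)
      rwa [mem_ball_zero_iff] at this
    obtain ⟨φ, hφd, hφm, c, hc0, hc1, hp⟩ := exists_phi (α 0) (α 1) hα _ _ hw0 hw1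
    refine ⟨φ ∘ g, hφd.comp hgd hgm, hφm.comp hgm, ⟨c, ?_⟩, ?_⟩
    · intro k
      fin_cases k
      · simpa using hc0
      · simpa using hc1
    · rw [hr]
      exact hp.symm
end

section
/- An n-point Pick interpolation problem z_j ↦ w_j (z_j ∈ Ω distinct, w_j ∈ D) has a holomorphic solution f: Ω → D if and only if either all w_j are equal, or there exists a pair (i,j) with w_i ≠ w_j and m(w_i, w_j) ≤ d^Ω_{(z,w)}(z_i, z_j). -/
open Complex Metric Set

section PickAux

open Filter
open scoped Topology

lemma normSq_one_sub_real_mul (x : ℝ) (u : ℂ) :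
    Complex.normSq (1 - (x:ℂ) * u) = 1 - 2*x*u.re + x^2 * Complex.normSq u := by
  simp [Complex.normSq_apply, Complex.mul_re, Complex.mul_im, Complex.sub_re, Complex.sub_im]
  ring

lemma pdist_eq {a b : ℂ} :
    pdist a b = ‖a - b‖ / ‖1 - (starRingEnd ℂ) a * b‖ := by
  rw [pdist, norm_div]

lemma denom_pos {a b : ℂ} (ha : ‖a‖ < 1) (hb : ‖b‖ < 1) :
    0 < ‖1 - (starRingEnd ℂ) a * b‖ := by
  have h1 : ‖(starRingEnd ℂ) a * b‖ = ‖a‖ * ‖b‖ := by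
    rw [norm_mul, Complex.norm_conj]
  have h2 : ‖(1:ℂ)‖ - ‖(starRingEnd ℂ) a * b‖ ≤ ‖1 - (starRingEnd ℂ) a * b‖ := norm_sub_norm_le _ _
  simp only [norm_one] at h2
  nlinarith [norm_nonneg a, norm_nonneg b]

lemma pdist_lt_one {a b : ℂ} (ha : ‖a‖ < 1) (hb : ‖b‖ < 1) :
    pdist a b < 1 := by
  rw [pdist_eq, div_lt_one (denom_pos ha hb)]
  have hid : Complex.normSq (1 - (starRingEnd ℂ) a * b) - Complex.normSq (a - b)
      = (1 - Complex.normSq a) * (1 - Complex.normSq b) := by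
    simp [Complex.normSq_apply, Complex.mul_re, Complex.mul_im, Complex.sub_re, Complex.sub_im]
    ring
  have hsa : Complex.normSq a < 1 := by
    rw [Complex.normSq_eq_norm_sq]; nlinarith [norm_nonneg a]
  have hsb : Complex.normSq b < 1 := by
    rw [Complex.normSq_eq_norm_sq]; nlinarith [norm_nonneg b]
  have h2 : (‖a-b‖)^2 < (‖1 - (starRingEnd ℂ) a * b‖)^2 := by
    rw [Complex.sq_norm, Complex.sq_norm]
    nlinarith [Complex.normSq_nonneg a, Complex.normSq_nonneg b]
  exact lt_of_pow_lt_pow_left₀ 2 (norm_nonneg _) h2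

lemma pdist_pos {a b : ℂ} (ha : ‖a‖ < 1) (hb : ‖b‖ < 1) (hab : a ≠ b) :
    0 < pdist a b := by
  rw [pdist_eq]
  exact div_pos (norm_pos_iff.mpr (sub_ne_zero.mpr hab)) (denom_pos ha hb)

lemma conj_mul_scale (a b c : ℂ) :
    (starRingEnd ℂ) (c*a) * (c*b) = ((‖c‖ ^ 2 : ℝ) : ℂ) * ((starRingEnd ℂ) a * b) := by
  rw [map_mul]
  have : ((‖c‖ ^ 2 : ℝ) : ℂ) = (starRingEnd ℂ) c * c := by
    rw [← Complex.normSq_eq_norm_sq, mul_comm ((starRingEnd ℂ) c) c, Complex.mul_conj]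
  rw [this]; ring

lemma pdist_scale (a b c : ℂ) :
    pdist (c*a) (c*b) = ‖c‖ * ‖a - b‖
      / ‖1 - ((‖c‖ ^ 2 : ℝ) : ℂ) * ((starRingEnd ℂ) a * b)‖ := by
  rw [pdist_eq, conj_mul_scale]
  have : c*a - c*b = c * (a-b) := by ring
  rw [this, norm_mul]

lemma real_key {t A d1 dt Ur : ℝ} (ht0 : 0 ≤ t) (ht1 : t ≤ 1) (hA0 : 0 < A)
    (hUr0 : 0 ≤ Ur) (hUr1 : Ur < 1)
    (hident : dt^2 - t^2*d1^2 = (1-t^2)*(1-t^2*Ur))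
    (hd1pos : 0 < d1) (hdtpos : 0 < dt) (hd1le : d1 ≤ 2) (hdtle : dt ≤ 2) :
    A * (1 - Ur) / 16 * (1 - t) ≤ A/d1 - t*A/dt := by
  rw [div_sub_div _ _ (ne_of_gt hd1pos) (ne_of_gt hdtpos), le_div_iff₀ (by positivity)]
  have step1 : dt + t*d1 ≤ 4 := by nlinarith
  have step15 : 0 < dt + t*d1 := by nlinarith
  have step2 : (dt - t*d1)*(dt + t*d1) = (1-t^2)*(1-t^2*Ur) := by linear_combination hident
  have htt : t^2 ≤ 1 := by nlinarith
  have step3 : (1-t)*(1-Ur) ≤ (1-t^2)*(1-t^2*Ur) := by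
    nlinarith [mul_nonneg (sub_nonneg.2 ht1) (mul_nonneg ht0 (sub_nonneg.2 hUr1.le)),
      mul_nonneg (mul_nonneg (mul_nonneg hUr0 (by linarith : (0:ℝ) ≤ 1+t)) (sub_nonneg.2 ht1))
        (sub_nonneg.2 htt)]
  have hXY0 : 0 ≤ (dt - t*d1)*(dt + t*d1) := by rw [step2]; nlinarith
  have hX0 : 0 ≤ dt - t*d1 := by nlinarith
  have step4 : (1-t)*(1-Ur)/4 ≤ dt - t*d1 := by nlinarith
  have hd1dt : d1*dt ≤ 4 := by nlinarith
  have hZ0 : 0 ≤ (1-t)*(1-Ur) := by nlinarith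
  have hAZ : A*((1-t)*(1-Ur)/4) ≤ A*(dt - t*d1) := mul_le_mul_of_nonneg_left step4 hA0.le
  have hcoef : 0 ≤ A*(1-Ur)/16*(1-t) := by nlinarith
  have hL : A*(1-Ur)/16*(1-t)*(d1*dt) ≤ A*(1-Ur)/16*(1-t)*4 :=
    mul_le_mul_of_nonneg_left hd1dt hcoef
  nlinarith [hAZ, hL]

lemma pdist_key {a b c : ℂ} (ha : ‖a‖ < 1) (hb : ‖b‖ < 1) (hab : a ≠ b)
    (hc : ‖c‖ ≤ 1) :
    ‖a - b‖ * (1 - Complex.normSq a * Complex.normSq b) / 16 * (1 - ‖c‖)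
      ≤ pdist a b - pdist (c*a) (c*b) := by
  have ht0 : 0 ≤ ‖c‖ := norm_nonneg c
  have hA0 : 0 < ‖a - b‖ := norm_pos_iff.mpr (sub_ne_zero.mpr hab)
  have habsu : ‖(starRingEnd ℂ) a * b‖ = ‖a‖ * ‖b‖ := by
    rw [norm_mul, Complex.norm_conj]
  have hu1 : ‖(starRingEnd ℂ) a * b‖ < 1 := by
    rw [habsu]; nlinarith [norm_nonneg a, norm_nonneg b]
  have hu0 : 0 ≤ ‖(starRingEnd ℂ) a * b‖ := norm_nonneg _
  have hUr : Complex.normSq ((starRingEnd ℂ) a * b) = Complex.normSq a * Complex.normSq b := by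
    rw [Complex.normSq_mul, Complex.normSq_conj]
  have hUreq : Complex.normSq ((starRingEnd ℂ) a * b) = (‖(starRingEnd ℂ) a * b‖)^2 :=
    Complex.normSq_eq_norm_sq _
  have hUr0 : 0 ≤ Complex.normSq ((starRingEnd ℂ) a * b) := Complex.normSq_nonneg _
  have hUr1 : Complex.normSq ((starRingEnd ℂ) a * b) < 1 := by rw [hUreq]; nlinarith
  have e1 : (‖1 - (starRingEnd ℂ) a * b‖)^2
      = 1 - 2*((starRingEnd ℂ) a * b).re + Complex.normSq ((starRingEnd ℂ) a * b) := by
    rw [Complex.sq_norm]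
    have h := normSq_one_sub_real_mul 1 ((starRingEnd ℂ) a * b)
    simpa using h
  have e2 : (‖1 - ((‖c‖^2 : ℝ):ℂ) * ((starRingEnd ℂ) a * b)‖)^2
      = 1 - 2*(‖c‖)^2*((starRingEnd ℂ) a * b).re
        + ((‖c‖)^2)^2 * Complex.normSq ((starRingEnd ℂ) a * b) := by
    rw [Complex.sq_norm]
    exact normSq_one_sub_real_mul ((‖c‖)^2) ((starRingEnd ℂ) a * b)
  have habs_tu : ‖((‖c‖^2 : ℝ):ℂ) * ((starRingEnd ℂ) a * b)‖
      = (‖c‖)^2 * ‖(starRingEnd ℂ) a * b‖ := by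
    rw [norm_mul, Complex.norm_real, Real.norm_eq_abs, _root_.abs_of_nonneg (by positivity)]
  have hd1pos : 0 < ‖1 - (starRingEnd ℂ) a * b‖ := by
    have h2 : ‖(1:ℂ)‖ - ‖(starRingEnd ℂ) a * b‖ ≤ ‖1 - (starRingEnd ℂ) a * b‖ :=
      norm_sub_norm_le _ _
    simp only [norm_one] at h2
    linarith
  have hdtpos : 0 < ‖1 - ((‖c‖^2 : ℝ):ℂ) * ((starRingEnd ℂ) a * b)‖ := by
    have h2 : ‖(1:ℂ)‖ - ‖((‖c‖^2 : ℝ):ℂ) * ((starRingEnd ℂ) a * b)‖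
        ≤ ‖1 - ((‖c‖^2 : ℝ):ℂ) * ((starRingEnd ℂ) a * b)‖ := norm_sub_norm_le _ _
    simp only [norm_one] at h2
    rw [habs_tu] at h2
    nlinarith
  have hd1le : ‖1 - (starRingEnd ℂ) a * b‖ ≤ 2 := by
    have h2 : ‖(1:ℂ) - (starRingEnd ℂ) a * b‖ ≤ ‖(1:ℂ)‖ + ‖(starRingEnd ℂ) a * b‖ :=
      norm_sub_le _ _
    simp only [norm_one] at h2
    linarith
  have hdtle : ‖1 - ((‖c‖^2 : ℝ):ℂ) * ((starRingEnd ℂ) a * b)‖ ≤ 2 := by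
    have h2 : ‖(1:ℂ) - ((‖c‖^2 : ℝ):ℂ) * ((starRingEnd ℂ) a * b)‖
        ≤ ‖(1:ℂ)‖ + ‖((‖c‖^2 : ℝ):ℂ) * ((starRingEnd ℂ) a * b)‖ := norm_sub_le _ _
    simp only [norm_one] at h2
    rw [habs_tu] at h2
    nlinarith
  have hident : (‖1 - ((‖c‖^2 : ℝ):ℂ) * ((starRingEnd ℂ) a * b)‖)^2
      - (‖c‖)^2*(‖1 - (starRingEnd ℂ) a * b‖)^2
      = (1-(‖c‖)^2)*(1-(‖c‖)^2*Complex.normSq ((starRingEnd ℂ) a * b)) := by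
    rw [e1, e2]; ring
  have hfin := real_key ht0 hc hA0 hUr0 hUr1 hident hd1pos hdtpos hd1le hdtle
  rw [pdist_eq, pdist_scale, ← hUr]
  convert hfin using 2

/-- Schwarz-type distance bound for holomorphic functions on a ball in ℂ^m. -/
lemma schwarz_dist {m : ℕ} {f : (Fin m → ℂ) → ℂ} {x y : Fin m → ℂ} {R M : ℝ}
    (hR : 0 < R) (hd : DifferentiableOn ℂ f (ball x R))
    (hb : ∀ w ∈ ball x R, ‖f w - f x‖ < M) (hy : y ∈ ball x R) :
    ‖f y - f x‖ ≤ M / R * ‖y - x‖ := by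
  have hM : 0 < M := by simpa using hb x (mem_ball_self hR)
  rcases eq_or_ne y x with rfl | hne
  · simp only [sub_self, norm_zero]
    positivity
  have hr0 : 0 < ‖y - x‖ := norm_pos_iff.mpr (sub_ne_zero.mpr hne)
  set r : ℝ := ‖y - x‖ with hrdef
  set u : Fin m → ℂ := ((r:ℂ))⁻¹ • (y - x) with hudef
  have hnu : ∀ ζ : ℂ, ‖ζ • u‖ = ‖ζ‖ := by
    intro ζ
    rw [hudef, norm_smul, norm_smul, norm_inv, Complex.norm_real, Real.norm_eq_abs,
      _root_.abs_of_nonneg hr0.le]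
    field_simp
    rw [hrdef]
  set γ : ℂ → (Fin m → ℂ) := fun ζ => x + ζ • u with hγdef
  have hγmem : ∀ ζ : ℂ, ζ ∈ ball (0:ℂ) R → γ ζ ∈ ball x R := by
    intro ζ hζ
    rw [mem_ball_iff_norm]
    simpa [hγdef, hnu ζ] using mem_ball_zero_iff.mp hζ
  have hγd : Differentiable ℂ γ := by
    exact (differentiable_id.smul_const u).const_add x
  set h : ℂ → ℂ := f ∘ γ with hhdef
  have hhd : DifferentiableOn ℂ h (ball (0:ℂ) R) :=
    hd.comp hγd.differentiableOn (fun ζ hζ => hγmem ζ hζ)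
  have h0 : h 0 = f x := by simp [hhdef, hγdef]
  have hmaps : MapsTo h (ball (0:ℂ) R) (ball (h 0) M) := by
    intro ζ hζ
    rw [mem_ball, dist_eq_norm, h0]
    exact hb _ (hγmem ζ hζ)
  have hzmem : (r:ℂ) ∈ ball (0:ℂ) R := by
    rw [mem_ball_zero_iff, Complex.norm_real, Real.norm_eq_abs, _root_.abs_of_nonneg hr0.le]
    exact mem_ball_iff_norm.mp hy
  have key := Complex.dist_le_div_mul_dist_of_mapsTo_ball hhd (hmaps.mono_right ball_subset_closedBall) hzmem
  have hγr : γ (r:ℂ) = y := by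
    rw [hγdef]
    simp only [hudef, smul_smul]
    rw [mul_inv_cancel₀ (by exact_mod_cast hr0.ne'), one_smul]
    abel
  have hfy : h (r:ℂ) = f y := by simp [hhdef, hγr]
  have hdr : dist ((r:ℂ)) 0 = r := by
    simp [Complex.dist_eq, Complex.norm_real, _root_.abs_of_nonneg hr0.le]
  rw [hfy, h0, hdr] at key
  simpa [dist_eq_norm] using key

/-- Cauchy-type bound on the Fréchet derivative. -/
lemma schwarz_deriv {m : ℕ} {f : (Fin m → ℂ) → ℂ} {x : Fin m → ℂ} {R M : ℝ}
    (hR : 0 < R) (hd : DifferentiableOn ℂ f (ball x R))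
    (hb : ∀ w ∈ ball x R, ‖f w - f x‖ < M) :
    ‖fderiv ℂ f x‖ ≤ M / R := by
  have hM : 0 < M := by simpa using hb x (mem_ball_self hR)
  have hdx : DifferentiableAt ℂ f x :=
    hd.differentiableAt (isOpen_ball.mem_nhds (mem_ball_self hR))
  refine ContinuousLinearMap.opNorm_le_bound _ (by positivity) fun v => ?_
  rcases eq_or_ne v 0 with rfl | hv
  · simp
  have hr0 : 0 < ‖v‖ := norm_pos_iff.mpr hv
  set r : ℝ := ‖v‖ with hrdef
  set u : Fin m → ℂ := ((r:ℂ))⁻¹ • v with hudef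
  have hnu : ∀ ζ : ℂ, ‖ζ • u‖ = ‖ζ‖ := by
    intro ζ
    rw [hudef, norm_smul, norm_smul, norm_inv, Complex.norm_real, Real.norm_eq_abs,
      _root_.abs_of_nonneg hr0.le]
    field_simp
    rw [hrdef]
  set γ : ℂ → (Fin m → ℂ) := fun ζ => x + ζ • u with hγdef
  have hγmem : ∀ ζ : ℂ, ζ ∈ ball (0:ℂ) R → γ ζ ∈ ball x R := by
    intro ζ hζ
    rw [mem_ball_iff_norm]
    simpa [hγdef, hnu ζ] using mem_ball_zero_iff.mp hζ
  have hγd : Differentiable ℂ γ := (differentiable_id.smul_const u).const_add x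
  set h : ℂ → ℂ := f ∘ γ with hhdef
  have hhd : DifferentiableOn ℂ h (ball (0:ℂ) R) :=
    hd.comp hγd.differentiableOn (fun ζ hζ => hγmem ζ hζ)
  have h0 : h 0 = f x := by simp [hhdef, hγdef]
  have hmaps : MapsTo h (ball (0:ℂ) R) (ball (h 0) M) := by
    intro ζ hζ
    rw [mem_ball, dist_eq_norm, h0]
    exact hb _ (hγmem ζ hζ)
  -- h has derivative (fderiv ℂ f x) u at 0
  have hγ0 : γ 0 = x := by simp [hγdef]
  have hγfd : HasFDerivAt γ (ContinuousLinearMap.toSpanSingleton ℂ u) 0 := by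
    have h1 : HasFDerivAt (fun ζ : ℂ => ζ • u) (ContinuousLinearMap.toSpanSingleton ℂ u) 0 :=
      (ContinuousLinearMap.toSpanSingleton ℂ u).hasFDerivAt
    exact h1.const_add x
  have hcomp : HasFDerivAt h ((fderiv ℂ f x).comp (ContinuousLinearMap.toSpanSingleton ℂ u)) 0 := by
    have h2 : HasFDerivAt f (fderiv ℂ f x) (γ 0) := by rw [hγ0]; exact hdx.hasFDerivAt
    exact h2.comp 0 hγfd
  have hder : HasDerivAt h ((fderiv ℂ f x) u) 0 := by
    have := hcomp.hasDerivAt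
    simpa [ContinuousLinearMap.toSpanSingleton_apply] using this
  have hd0 : deriv h 0 = (fderiv ℂ f x) u := hder.deriv
  have key := Complex.norm_deriv_le_div_of_mapsTo_ball hhd (hmaps.mono_right ball_subset_closedBall) hR
  rw [hd0] at key
  -- now ‖T v‖ = r * ‖T u‖
  have hvu : ((r:ℂ)) • u = v := by
    rw [hudef, smul_smul, mul_inv_cancel₀ (by exact_mod_cast hr0.ne'), one_smul]
  calc ‖(fderiv ℂ f x) v‖ = ‖(fderiv ℂ f x) (((r:ℂ)) • u)‖ := by rw [hvu]
    _ = ‖(r:ℂ)‖ * ‖(fderiv ℂ f x) u‖ := by rw [map_smul, norm_smul]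
    _ ≤ r * (M/R) := by
        rw [Complex.norm_real, Real.norm_eq_abs, _root_.abs_of_nonneg hr0.le]
        exact mul_le_mul_of_nonneg_left key hr0.le
    _ = M / R * ‖v‖ := by rw [hrdef]; ring
lemma montel {m : ℕ} {Ω : Set (Fin m → ℂ)} (hopen : IsOpen Ω)
    (F : ℕ → (Fin m → ℂ) → ℂ) (hdiff : ∀ ν, DifferentiableOn ℂ (F ν) Ω)
    (hbdd : ∀ ν, ∀ x ∈ Ω, ‖F ν x‖ ≤ 1)
    (U : Ultrafilter ℕ) (g : (Fin m → ℂ) → ℂ)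
    (hg : ∀ x ∈ Ω, Tendsto (fun ν => F ν x) ↑U (𝓝 (g x))) :
    DifferentiableOn ℂ g Ω := by
  intro x₀ hx₀
  obtain ⟨ε, hε, hball⟩ := Metric.isOpen_iff.mp hopen x₀ hx₀
  set R := ε/8 with hRdef
  have hR : 0 < R := by positivity
  have h7 : ball x₀ (7*R) ⊆ Ω := (ball_subset_ball (by linarith)).trans hball
  have hB2 : ball x₀ (2*R) ⊆ Ω := (ball_subset_ball (by linarith)).trans h7
  have hsΩ : ball x₀ R ⊆ Ω := (ball_subset_ball (by linarith)).trans h7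
  have hsB2 : ∀ x ∈ ball x₀ R, ball x R ⊆ ball x₀ (2*R) := by
    intro x hx w hw
    rw [mem_ball] at *
    calc dist w x₀ ≤ dist w x + dist x x₀ := dist_triangle _ _ _
      _ < 2*R := by linarith
  -- uniform Lipschitz bound on the double ball
  have hLip : ∀ (f : (Fin m → ℂ) → ℂ), DifferentiableOn ℂ f Ω → (∀ y ∈ Ω, ‖f y‖ ≤ 1) →
      ∀ x ∈ ball x₀ (2*R), ∀ y ∈ ball x₀ (2*R), ‖f y - f x‖ ≤ 3/(5*R) * ‖y - x‖ := by
    intro f hfd hfb x hx y hy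
    have hbx : ball x (5*R) ⊆ Ω := by
      intro w hw
      apply h7
      rw [mem_ball] at hw hx ⊢
      calc dist w x₀ ≤ dist w x + dist x x₀ := dist_triangle _ _ _
        _ < 7*R := by linarith
    have h5R : (0:ℝ) < 5*R := by positivity
    have key := schwarz_dist (f := f) (x := x) (y := y) (R := 5*R) (M := 3) h5R
      (hfd.mono hbx) (fun w hw => by
        have h1 := hfb w (hbx hw)
        have h2 := hfb x (hbx (mem_ball_self h5R))
        calc ‖f w - f x‖ ≤ ‖f w‖ + ‖f x‖ := norm_sub_le _ _
          _ < 3 := by linarith)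
      (by
        rw [mem_ball] at hx hy ⊢
        calc dist y x ≤ dist y x₀ + dist x₀ x := dist_triangle _ _ _
          _ < 5*R := by rw [dist_comm x₀ x]; linarith)
    exact key
  have hgbd : ∀ x ∈ Ω, ‖g x‖ ≤ 1 := by
    intro x hx
    exact le_of_tendsto (hg x hx).norm (Filter.Eventually.of_forall fun ν => hbdd ν x hx)
  have hgLip : ∀ x ∈ ball x₀ (2*R), ∀ y ∈ ball x₀ (2*R), ‖g y - g x‖ ≤ 3/(5*R) * ‖y - x‖ := by
    intro x hx y hy
    have ht : Tendsto (fun ν => ‖F ν y - F ν x‖) ↑U (𝓝 ‖g y - g x‖) :=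
      ((hg y (hB2 hy)).sub (hg x (hB2 hx))).norm
    exact le_of_tendsto ht
      (Filter.Eventually.of_forall fun ν => hLip (F ν) (hdiff ν) (hbdd ν) x hx y hy)
  -- uniform convergence of the functions on the double ball
  have hunif : ∀ δ : ℝ, 0 < δ →
      ∀ᶠ ν in (U : Filter ℕ), ∀ x ∈ ball x₀ (2*R), ‖F ν x - g x‖ ≤ δ := by
    intro δ hδ
    set L := 3/(5*R) with hLdef
    have hL0 : 0 < L := by positivity
    have hδ' : 0 < δ/(3*(L+1)) := by positivity
    have htb : TotallyBounded (ball x₀ (2*R)) :=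
      ((isCompact_closedBall x₀ (2*R)).totallyBounded).subset ball_subset_closedBall
    obtain ⟨t, hts, htfin, htcov⟩ := Metric.finite_approx_of_totallyBounded htb _ hδ'
    have hev : ∀ᶠ ν in (U : Filter ℕ), ∀ p ∈ t, ‖F ν p - g p‖ < δ/3 := by
      rw [Filter.eventually_all_finite htfin]
      intro p hp
      filter_upwards [Metric.tendsto_nhds.mp (hg p (hB2 (hts hp))) (δ/3) (by positivity)] with ν hν
      rwa [dist_eq_norm] at hν
    filter_upwards [hev] with ν hν x hx
    obtain ⟨p, hp, hxp⟩ : ∃ p ∈ t, x ∈ ball p (δ/(3*(L+1))) := by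
      have := htcov hx
      simpa using this
    have hpB : p ∈ ball x₀ (2*R) := hts hp
    have e1 : ‖F ν x - F ν p‖ ≤ L * ‖x - p‖ := hLip (F ν) (hdiff ν) (hbdd ν) p hpB x hx
    have e2 : ‖g p - g x‖ ≤ L * ‖p - x‖ := hgLip x hx p hpB
    have hxp' : ‖x - p‖ < δ/(3*(L+1)) := by rwa [mem_ball, dist_eq_norm] at hxp
    have hpx' : ‖p - x‖ = ‖x - p‖ := norm_sub_rev _ _
    have hLd : L * ‖x - p‖ ≤ δ/3 := by
      have h1 : L * ‖x - p‖ ≤ L * (δ/(3*(L+1))) := mul_le_mul_of_nonneg_left hxp'.le hL0.le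
      have h2 : L * (δ/(3*(L+1))) = (L/(L+1)) * (δ/3) := by field_simp
      have h3 : L/(L+1) ≤ 1 := by rw [div_le_one (by linarith)]; linarith
      have h4 : (L/(L+1)) * (δ/3) ≤ 1 * (δ/3) :=
        mul_le_mul_of_nonneg_right h3 (by positivity)
      rw [h2] at h1
      linarith
    have hsplit : F ν x - g x = (F ν x - F ν p) + (F ν p - g p) + (g p - g x) := by ring
    calc ‖F ν x - g x‖ ≤ ‖F ν x - F ν p‖ + ‖F ν p - g p‖ + ‖g p - g x‖ := by
          rw [hsplit]; exact norm_add₃_le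
      _ ≤ δ/3 + δ/3 + δ/3 := by
          have := hν p hp
          rw [hpx'] at e2
          gcongr <;> linarith
      _ = δ := by ring
  -- derivatives
  have hDAt : ∀ (ν : ℕ), ∀ x ∈ ball x₀ R, DifferentiableAt ℂ (F ν) x := fun ν x hx =>
    (hdiff ν).differentiableAt (hopen.mem_nhds (hsΩ hx))
  have hfdbd : ∀ (ν : ℕ), ∀ x ∈ ball x₀ R, ‖fderiv ℂ (F ν) x‖ ≤ 3/R := by
    intro ν x hx
    refine schwarz_deriv hR ((hdiff ν).mono (fun w hw => hB2 (hsB2 x hx hw)))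
      (fun w hw => ?_)
    have h1 := hbdd ν w (hB2 (hsB2 x hx hw))
    have h2 := hbdd ν x (hB2 (hsB2 x hx (mem_ball_self hR)))
    calc ‖F ν w - F ν x‖ ≤ ‖F ν w‖ + ‖F ν x‖ := norm_sub_le _ _
      _ < 3 := by linarith
  haveI : ProperSpace ((Fin m → ℂ) →L[ℂ] ℂ) := FiniteDimensional.proper ℂ _
  have hglim : ∀ x : Fin m → ℂ, ∃ T : (Fin m → ℂ) →L[ℂ] ℂ,
      x ∈ ball x₀ R → Tendsto (fun ν => fderiv ℂ (F ν) x) ↑U (𝓝 T) := by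
    intro x
    by_cases hx : x ∈ ball x₀ R
    · obtain ⟨T, _, hT⟩ := (isCompact_closedBall (0 : (Fin m → ℂ) →L[ℂ] ℂ) (3/R)).ultrafilter_le_nhds
        (U.map fun ν => fderiv ℂ (F ν) x) (by
          rw [Ultrafilter.coe_map, le_principal_iff, Filter.mem_map]
          exact Filter.univ_mem' fun ν => mem_closedBall_zero_iff.mpr (hfdbd ν x hx))
      exact ⟨T, fun _ => hT⟩
    · exact ⟨0, fun h => absurd h hx⟩
  choose g' hg'lim using hglim
  have hdunif : ∀ δ : ℝ, 0 < δ →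
      ∀ᶠ ν in (U : Filter ℕ), ∀ x ∈ ball x₀ R, ‖fderiv ℂ (F ν) x - g' x‖ ≤ δ := by
    intro δ hδ
    have hd2 : 0 < δ*R/10 := by positivity
    have hcau : ∀ (ν μ : ℕ), (∀ y ∈ ball x₀ (2*R), ‖F ν y - g y‖ ≤ δ*R/10) →
        (∀ y ∈ ball x₀ (2*R), ‖F μ y - g y‖ ≤ δ*R/10) →
        ∀ x ∈ ball x₀ R, ‖fderiv ℂ (F ν) x - fderiv ℂ (F μ) x‖ ≤ δ/2 := by
      intro ν μ hν hμ x hx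
      have hsub : ball x R ⊆ ball x₀ (2*R) := hsB2 x hx
      have hdf : DifferentiableOn ℂ (fun y => F ν y - F μ y) (ball x R) :=
        ((hdiff ν).mono (fun w hw => hB2 (hsub hw))).sub
          ((hdiff μ).mono (fun w hw => hB2 (hsub hw)))
      have hkey := schwarz_deriv (M := δ*R/2) hR hdf (fun w hw => by
        have e1 := hν w (hsub hw)
        have e2 := hμ w (hsub hw)
        have e3 := hν x (hsub (mem_ball_self hR))
        have e4 := hμ x (hsub (mem_ball_self hR))
        have hsplit : (F ν w - F μ w) - (F ν x - F μ x)
            = (F ν w - g w) - (F μ w - g w) - (F ν x - g x) + (F μ x - g x) := by ring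
        calc ‖(F ν w - F μ w) - (F ν x - F μ x)‖
            = ‖(F ν w - g w) - (F μ w - g w) - (F ν x - g x) + (F μ x - g x)‖ := by rw [hsplit]
          _ ≤ ‖(F ν w - g w) - (F μ w - g w) - (F ν x - g x)‖ + ‖F μ x - g x‖ := norm_add_le _ _
          _ ≤ ‖(F ν w - g w) - (F μ w - g w)‖ + ‖F ν x - g x‖ + ‖F μ x - g x‖ := by
              gcongr; exact norm_sub_le _ _
          _ ≤ (‖F ν w - g w‖ + ‖F μ w - g w‖) + ‖F ν x - g x‖ + ‖F μ x - g x‖ := by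
              gcongr; exact norm_sub_le _ _
          _ < δ*R/2 := by linarith)
      have heq : fderiv ℂ (fun y => F ν y - F μ y) x = fderiv ℂ (F ν) x - fderiv ℂ (F μ) x :=
        fderiv_sub (hDAt ν x hx) (hDAt μ x hx)
      rw [heq] at hkey
      have : δ*R/2/R = δ/2 := by field_simp
      rwa [this] at hkey
    filter_upwards [hunif (δ*R/10) hd2] with ν hν x hx
    have hten : Tendsto (fun μ => fderiv ℂ (F μ) x) ↑U (𝓝 (g' x)) := hg'lim x hx
    have hmem : g' x ∈ closedBall (fderiv ℂ (F ν) x) (δ/2) := by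
      refine (Metric.isClosed_closedBall).mem_of_tendsto hten ?_
      filter_upwards [hunif (δ*R/10) hd2] with μ hμ
      rw [mem_closedBall, dist_eq_norm, norm_sub_rev]
      exact hcau ν μ hν hμ x hx
    rw [mem_closedBall, dist_eq_norm] at hmem
    rw [norm_sub_rev]
    linarith
  have hfin : HasFDerivAt g (g' x₀) x₀ := by
    refine hasFDerivAt_of_tendstoUniformlyOn isOpen_ball ?_ (fun ν x hx => (hDAt ν x hx).hasFDerivAt)
      (fun x hx => hg x (hsΩ hx)) (mem_ball_self hR)
    rw [Metric.tendstoUniformlyOn_iff]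
    intro ε' hε'
    filter_upwards [hdunif (ε'/2) (by positivity)] with ν hν x hx
    rw [dist_eq_norm, norm_sub_rev]
    calc ‖fderiv ℂ (F ν) x - g' x‖ ≤ ε'/2 := hν x hx
      _ < ε' := by linarith
  exact hfin.differentiableAt.differentiableWithinAt

end PickAux

section Main
open Filter
open scoped Topology

theorem stmt11 (m n : ℕ) (Ω : Set (Fin m → ℂ)) (hopen : IsOpen Ω) (hconn : IsConnected Ω)
    (hCara : ∀ x ∈ Ω, ∀ y ∈ Ω, x ≠ y → ∃ f : (Fin m → ℂ) → ℂ,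
      DifferentiableOn ℂ f Ω ∧ (∃ c : ℝ, ∀ x' ∈ Ω, ‖f x'‖ ≤ c) ∧ f x ≠ f y)
    (z : Fin n → (Fin m → ℂ)) (hz : ∀ j, z j ∈ Ω) (hinj : Function.Injective z)
    (w : Fin n → ℂ) (hw : ∀ j, w j ∈ ball (0:ℂ) 1) :
    (∃ f : (Fin m → ℂ) → ℂ, DifferentiableOn ℂ f Ω ∧
        MapsTo f Ω (ball (0:ℂ) 1) ∧ ∀ j, f (z j) = w j) ↔
      ((∀ i j, w i = w j) ∨
        ∃ i j, w i ≠ w j ∧ pdist (w i) (w j) ≤ dInv m n Ω z w i j) := by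
  have hwa : ∀ k, ‖w k‖ < 1 := fun k => by
    have := mem_ball_zero_iff.mp (hw k); exact this
  constructor
  · rintro ⟨f, hfd, hfm, hfv⟩
    by_cases hall : ∀ i j, w i = w j
    · exact Or.inl hall
    · push_neg at hall
      obtain ⟨i, j, hij⟩ := hall
      refine Or.inr ⟨i, j, hij, ?_⟩
      have hBdd : BddAbove {r : ℝ | ∃ f : (Fin m → ℂ) → ℂ, DifferentiableOn ℂ f Ω ∧
          MapsTo f Ω (ball (0:ℂ) 1) ∧ (∃ c : ℂ, ∀ k, f (z k) = c * w k) ∧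
          r = pdist (f (z i)) (f (z j))} := by
        refine ⟨1, fun r hr => ?_⟩
        obtain ⟨f', hfd', hfm', _, hr'⟩ := hr
        have h1 : ‖f' (z i)‖ < 1 := by
          have := mem_ball_zero_iff.mp (hfm' (hz i)); exact this
        have h2 : ‖f' (z j)‖ < 1 := by
          have := mem_ball_zero_iff.mp (hfm' (hz j)); exact this
        rw [hr']; exact (pdist_lt_one h1 h2).le
      have hmem : pdist (w i) (w j) ∈ {r : ℝ | ∃ f : (Fin m → ℂ) → ℂ, DifferentiableOn ℂ f Ω ∧
          MapsTo f Ω (ball (0:ℂ) 1) ∧ (∃ c : ℂ, ∀ k, f (z k) = c * w k) ∧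
          r = pdist (f (z i)) (f (z j))} :=
        ⟨f, hfd, hfm, ⟨1, fun k => by rw [hfv k, one_mul]⟩, by rw [hfv i, hfv j]⟩
      exact le_csSup hBdd hmem
  · rintro (hall | ⟨i, j, hij, hle⟩)
    · rcases Nat.eq_zero_or_pos n with rfl | hn
      · exact ⟨fun _ => 0, differentiableOn_const 0,
          fun x _ => mem_ball_self one_pos, fun k => k.elim0⟩
      · exact ⟨fun _ => w ⟨0, hn⟩, differentiableOn_const _,
          fun x _ => hw ⟨0, hn⟩, fun k => hall ⟨0, hn⟩ k⟩
    · -- the hard direction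
      simp only [dInv] at hle
      have hP : 0 < pdist (w i) (w j) := pdist_pos (hwa i) (hwa j) hij
      have hP1 : pdist (w i) (w j) < 1 := pdist_lt_one (hwa i) (hwa j)
      set K := ‖w i - w j‖ * (1 - Complex.normSq (w i) * Complex.normSq (w j)) / 16
        with hKdef
      have hnsi : Complex.normSq (w i) < 1 := by
        rw [Complex.normSq_eq_norm_sq]; nlinarith [norm_nonneg (w i), hwa i]
      have hnsj : Complex.normSq (w j) < 1 := by
        rw [Complex.normSq_eq_norm_sq]; nlinarith [norm_nonneg (w j), hwa j]
      have hK : 0 < K := by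
        rw [hKdef]
        apply div_pos _ (by norm_num)
        apply mul_pos (norm_pos_iff.mpr (sub_ne_zero.mpr hij))
        nlinarith [Complex.normSq_nonneg (w i), Complex.normSq_nonneg (w j)]
      have hSne : {r : ℝ | ∃ f : (Fin m → ℂ) → ℂ, DifferentiableOn ℂ f Ω ∧
          MapsTo f Ω (ball (0:ℂ) 1) ∧ (∃ c : ℂ, ∀ k, f (z k) = c * w k) ∧
          r = pdist (f (z i)) (f (z j))}.Nonempty :=
        ⟨0, ⟨fun _ => 0, differentiableOn_const 0, fun x _ => mem_ball_self one_pos,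
          ⟨0, fun k => by rw [zero_mul]⟩, by simp [pdist]⟩⟩
      by_cases hbig : ∃ f : (Fin m → ℂ) → ℂ, ∃ c : ℂ, DifferentiableOn ℂ f Ω ∧
          MapsTo f Ω (ball (0:ℂ) 1) ∧ (∀ k, f (z k) = c * w k) ∧ 1 < ‖c‖
      · obtain ⟨f, c, hfd, hfm, hfv, hc⟩ := hbig
        have hcn : (0:ℝ) < ‖c‖ := by linarith
        have hc0 : c ≠ 0 := by
          intro h; rw [h, norm_zero] at hc; norm_num at hc
        refine ⟨fun x => f x * c⁻¹, hfd.mul_const c⁻¹,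
          fun x hx => ?_, fun k => ?_⟩
        · rw [mem_ball_zero_iff, norm_mul, norm_inv]
          have h1 := mem_ball_zero_iff.mp (hfm hx)
          have h2 : (1:ℝ) < ‖c‖ := by exact hc
          rw [mul_inv_lt_iff₀ (by linarith), one_mul]
          linarith
        · show f (z k) * c⁻¹ = w k
          rw [hfv k]; field_simp
      · push_neg at hbig
        have hseq : ∀ ν : ℕ, ∃ p : ((Fin m → ℂ) → ℂ) × ℂ,
            DifferentiableOn ℂ p.1 Ω ∧ MapsTo p.1 Ω (ball (0:ℂ) 1) ∧
            (∀ k, p.1 (z k) = p.2 * w k) ∧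
            1 - 1/((ν:ℝ)+1) ≤ ‖p.2‖ ∧ ‖p.2‖ ≤ 1 := by
          intro ν
          have hν1 : (0:ℝ) < 1/((ν:ℝ)+1) := by positivity
          have hKν : 0 < K * (1/((ν:ℝ)+1)) := by positivity
          have hlt : pdist (w i) (w j) - K * (1/((ν:ℝ)+1)) < sSup {r : ℝ |
              ∃ f : (Fin m → ℂ) → ℂ, DifferentiableOn ℂ f Ω ∧
              MapsTo f Ω (ball (0:ℂ) 1) ∧ (∃ c : ℂ, ∀ k, f (z k) = c * w k) ∧
              r = pdist (f (z i)) (f (z j))} := lt_of_lt_of_le (by linarith) hle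
          obtain ⟨r, hrS, hrgt⟩ := exists_lt_of_lt_csSup hSne hlt
          obtain ⟨f, hfd, hfm, ⟨c, hfc⟩, hreq⟩ := hrS
          have hcle : ‖c‖ ≤ 1 := hbig f c hfd hfm hfc
          have hkey := pdist_key (hwa i) (hwa j) hij hcle
          rw [← hKdef] at hkey
          have hrval : r = pdist (c * w i) (c * w j) := by rw [hreq, hfc i, hfc j]
          have h5 : K * (1 - ‖c‖) < K * (1/((ν:ℝ)+1)) := by
            have h6 : pdist (w i) (w j) - r ≤ pdist (w i) (w j)
                - pdist (c * w i) (c * w j) := by rw [hrval]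
            nlinarith [hkey]
          have h6 : 1 - ‖c‖ < 1/((ν:ℝ)+1) := (mul_lt_mul_iff_right₀ hK).mp h5
          exact ⟨(f, c), hfd, hfm, hfc, by linarith, hcle⟩
        choose FC hFd hFm hFv hFlo hFhi using hseq
        set F : ℕ → (Fin m → ℂ) → ℂ := fun ν => (FC ν).1 with hFdef
        set C : ℕ → ℂ := fun ν => (FC ν).2 with hCdef
        have hFv' : ∀ (ν : ℕ) (k : Fin n), F ν (z k) = C ν * w k := hFv
        have hFlo' : ∀ ν : ℕ, 1 - 1/((ν:ℝ)+1) ≤ ‖C ν‖ := hFlo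
        have hFhi' : ∀ ν : ℕ, ‖C ν‖ ≤ 1 := hFhi
        set U : Ultrafilter ℕ := Ultrafilter.of atTop with hUdef
        have hUle : (U : Filter ℕ) ≤ atTop := Ultrafilter.of_le _
        have hFbd : ∀ ν, ∀ x ∈ Ω, ‖F ν x‖ ≤ 1 := fun ν x hx =>
          (mem_ball_zero_iff.mp (hFm ν hx)).le
        have hptw : ∀ x : Fin m → ℂ, ∃ a : ℂ,
            x ∈ Ω → Tendsto (fun ν => F ν x) ↑U (𝓝 a) := by
          intro x
          by_cases hx : x ∈ Ω
          · obtain ⟨a, _, ha⟩ := (isCompact_closedBall (0:ℂ) 1).ultrafilter_le_nhds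
              (U.map fun ν => F ν x) (by
                rw [Ultrafilter.coe_map, le_principal_iff, Filter.mem_map]
                exact Filter.univ_mem' fun ν => mem_closedBall_zero_iff.mpr (hFbd ν x hx))
            exact ⟨a, fun _ => ha⟩
          · exact ⟨0, fun h => absurd h hx⟩
        choose g hgt using hptw
        have hglim : ∀ x ∈ Ω, Tendsto (fun ν => F ν x) ↑U (𝓝 (g x)) := fun x hx => hgt x hx
        have hgd : DifferentiableOn ℂ g Ω := montel hopen F hFd hFbd U g hglim
        have hgbd : ∀ x ∈ Ω, ‖g x‖ ≤ 1 := fun x hx =>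
          le_of_tendsto (hglim x hx).norm (Filter.Eventually.of_forall fun ν => hFbd ν x hx)
        obtain ⟨q, hwq⟩ : ∃ q : Fin n, w q ≠ 0 := by
          by_cases h : w j = 0
          · exact ⟨i, fun hi => hij (by rw [hi, h])⟩
          · exact ⟨j, h⟩
        set c : ℂ := g (z q) / w q with hcdef
        have hCν : ∀ ν, C ν = F ν (z q) / w q := by
          intro ν
          rw [hFv' ν q]
          field_simp
        have hCt : Tendsto C ↑U (𝓝 c) := by
          rw [hcdef]
          exact Tendsto.congr (fun ν => (hCν ν).symm) ((hglim (z q) (hz q)).div_const (w q))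
        have habs : Tendsto (fun ν => ‖C ν‖) ↑U (𝓝 (‖c‖)) :=
          (continuous_norm.tendsto c).comp hCt
        have habs1 : Tendsto (fun ν => ‖C ν‖) atTop (𝓝 1) := by
          have hlow : Tendsto (fun ν : ℕ => 1 - 1/((ν:ℝ)+1)) atTop (𝓝 1) := by
            have h0 := tendsto_one_div_add_atTop_nhds_zero_nat (𝕜 := ℝ)
            have h1 : Tendsto (fun _ : ℕ => (1:ℝ)) atTop (𝓝 1) := tendsto_const_nhds
            simpa using h1.sub h0
          exact tendsto_of_tendsto_of_tendsto_of_le_of_le hlow tendsto_const_nhds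
            (fun ν => hFlo' ν) (fun ν => hFhi' ν)
        have hc1 : ‖c‖ = 1 :=
          tendsto_nhds_unique habs (habs1.mono_left hUle)
        have hgv : ∀ k, g (z k) = c * w k := by
          intro k
          have h1 : Tendsto (fun ν => F ν (z k) * w q) ↑U (𝓝 (g (z k) * w q)) :=
            (hglim (z k) (hz k)).mul_const _
          have h2 : (fun ν => F ν (z k) * w q) = fun ν => F ν (z q) * w k := by
            funext ν; rw [hFv' ν k, hFv' ν q]; ring
          have h3 : Tendsto (fun ν => F ν (z q) * w k) ↑U (𝓝 (g (z q) * w k)) :=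
            (hglim (z q) (hz q)).mul_const _
          have h4 : g (z k) * w q = g (z q) * w k := tendsto_nhds_unique (h2 ▸ h1) h3
          rw [hcdef]
          field_simp
          linear_combination h4
        have hcconj : (starRingEnd ℂ) c * c = 1 := by
          have h1 : c * (starRingEnd ℂ) c = ((Complex.normSq c : ℝ) : ℂ) := Complex.mul_conj c
          rw [mul_comm] at h1
          rw [h1, Complex.normSq_eq_norm_sq, hc1]
          norm_num
        have hFfd : DifferentiableOn ℂ (fun x => (starRingEnd ℂ) c * g x) Ω :=
          hgd.const_mul _
        have hFfv : ∀ k, (starRingEnd ℂ) c * g (z k) = w k := by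
          intro k
          rw [hgv k, ← mul_assoc, hcconj, one_mul]
        have hFfbd : ∀ x ∈ Ω, ‖(starRingEnd ℂ) c * g x‖ ≤ 1 := by
          intro x hx
          rw [norm_mul]
          have h1 : ‖(starRingEnd ℂ) c‖ = 1 := by
            rw [Complex.norm_conj, hc1]
          rw [h1, one_mul]
          exact hgbd x hx
        have hlt : ∀ x ∈ Ω, ‖(starRingEnd ℂ) c * g x‖ < 1 := by
          by_contra hcon
          push_neg at hcon
          obtain ⟨x₁, hx₁, hge⟩ := hcon
          have hmax : IsMaxOn (norm ∘ (fun x => (starRingEnd ℂ) c * g x)) Ω x₁ := by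
            intro y hy
            simp only [Function.comp_apply]
            exact le_trans (hFfbd y hy) hge
          have heqon := Complex.eqOn_of_isPreconnected_of_isMaxOn_norm
            hconn.isPreconnected hopen hFfd hx₁ hmax
          have h1 : (starRingEnd ℂ) c * g (z i) = (starRingEnd ℂ) c * g (z j) :=
            (heqon (hz i)).trans (heqon (hz j)).symm
          rw [hFfv i, hFfv j] at h1
          exact hij h1
        exact ⟨fun x => (starRingEnd ℂ) c * g x, hFfd,
          fun x hx => mem_ball_zero_iff.mpr (hlt x hx), hFfv⟩

end Main
end
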